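/- arXiv:1208.2888 — 4 statements merged into one kernel-verified Lean document; each statement's English description precedes it below -/
import Mathlib

section
/- Let t ∈ ℝ, let μ be an ergodic T-invariant probability measure on (Θ, 𝓑), and let φ : Θ → [0,∞) be any measurable T_t-invariant function. Then either φ = 0 μ-almost everywhere or φ = φ_t μ-almost everywhere. -/
open MeasureTheory Filter Topology

/-- The general setting of the paper: a measurable base system with invertible
driving map `T`, a concave fibre function `h` (with its derivative `h'` on `[0,∞)`)
and a bounded measurable positive function `g`. -/
structure Setting (Θ : Type*) [MeasurableSpace Θ] where
  T : Θ → Θ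
  Tinv : Θ → Θ
  left_inv : Function.LeftInverse Tinv T
  right_inv : Function.RightInverse Tinv T
  T_meas : Measurable T
  Tinv_meas : Measurable Tinv
  h : ℝ → ℝ
  h' : ℝ → ℝ
  h_hasDeriv : ∀ x ∈ Set.Ici (0 : ℝ), HasDerivWithinAt h (h' x) (Set.Ici 0) x
  h'_cont : ContinuousOn h' (Set.Ici 0)
  h_strictConcave : StrictConcaveOn ℝ (Set.Ici 0) h
  h_zero : h 0 = 0
  h'_pos : ∀ x : ℝ, 0 < x → 0 < h' x
  h'_zero : h' 0 = 1
  h_sublinear : Tendsto (fun x => h x / x) atTop (𝓝 0)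
  g : Θ → ℝ
  g_pos : ∀ θ, 0 < g θ
  g_bdd : ∃ C : ℝ, ∀ θ, g θ ≤ C
  g_meas : Measurable g

namespace Setting

variable {Θ : Type*} [MeasurableSpace Θ]

/-- The fibre maps `f_t(θ,x) = e^{-t} g(θ) h(x)`. -/
noncomputable def f (S : Setting Θ) (t : ℝ) (θ : Θ) (x : ℝ) : ℝ :=
  Real.exp (-t) * S.g θ * S.h x

/-- The iterated fibre maps: `fn t 0 θ x = x` and
`fn t (n+1) θ x = f t (T^[n] θ) (fn t n θ x)`, so that `fn t 1 = f t`. -/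
noncomputable def fn (S : Setting Θ) (t : ℝ) : ℕ → Θ → ℝ → ℝ
  | 0, _, x => x
  | n + 1, θ, x => S.f t (S.T^[n] θ) (S.fn t n θ x)

/-- `ψ_{t,n}(θ) = f_t^n(T^{-n}θ, M)`. -/
noncomputable def ψ (S : Setting Θ) (t M : ℝ) (n : ℕ) (θ : Θ) : ℝ :=
  S.fn t n (S.Tinv^[n] θ) M

/-- The maximal invariant function `φ_t(θ) = inf_{n ≥ 1} ψ_{t,n}(θ)`. -/
noncomputable def φ (S : Setting Θ) (t M : ℝ) (θ : Θ) : ℝ :=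
  ⨅ n : ℕ, S.ψ t M (n + 1) θ

/-- The zero set `N_t = {θ : φ_t(θ) = 0}`. -/
noncomputable def Nset (S : Setting Θ) (t M : ℝ) : Set Θ := {θ | S.φ t M θ = 0}

/-- The critical parameter `t_c(θ) = inf {t : φ_t(θ) = 0}`. -/
noncomputable def tc (S : Setting Θ) (M : ℝ → ℝ) (θ : Θ) : ℝ :=
  sInf {t : ℝ | S.φ t (M t) θ = 0}

/-- The bifurcation set `S_t = {θ : t_c(θ) = t}`. -/
noncomputable def Sset (S : Setting Θ) (M : ℝ → ℝ) (t : ℝ) : Set Θ :=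
  {θ | S.tc M θ = t}

/-- The Birkhoff average `Γ^{(n)}(θ) = (1/n) ∑_{k=1}^n log g(T^{-k}θ)`. -/
noncomputable def Γn (S : Setting Θ) (n : ℕ) (θ : Θ) : ℝ :=
  (∑ k ∈ Finset.range n, Real.log (S.g (S.Tinv^[k + 1] θ))) / n

/-- The lower backwards Lyapunov average `Γ(θ) = liminf_n Γ^{(n)}(θ)`. -/
noncomputable def Γ (S : Setting Θ) (θ : Θ) : ℝ :=
  Filter.liminf (fun n : ℕ => S.Γn n θ) Filter.atTop

/-- The averaged exponent `γ(μ) = ∫ log g dμ`. -/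
noncomputable def γfn (S : Setting Θ) (μ : Measure Θ) : ℝ :=
  ∫ θ, Real.log (S.g θ) ∂μ

/-- The function `H(x) = log (h(x)/x)`. -/
noncomputable def Hfn (S : Setting Θ) (x : ℝ) : ℝ := Real.log (S.h x / x)

end Setting

section Aux

variable {Θ : Type*} [MeasurableSpace Θ] (S : Setting Θ)

lemma Setting.h_cont : ContinuousOn S.h (Set.Ici 0) :=
  fun x hx => (S.h_hasDeriv x hx).continuousWithinAt

lemma Setting.h_smono : StrictMonoOn S.h (Set.Ici 0) := by
  refine strictMonoOn_of_hasDerivWithinAt_pos (convex_Ici 0) S.h_cont (f' := S.h') ?_ ?_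
  · intro x hx
    rw [interior_Ici] at hx ⊢
    exact (S.h_hasDeriv x (Set.mem_Ici.mpr (le_of_lt (Set.mem_Ioi.mp hx)))).mono Set.Ioi_subset_Ici_self
  · intro x hx
    rw [interior_Ici] at hx
    exact S.h'_pos x hx

lemma Setting.h_pos {x : ℝ} (hx : 0 < x) : 0 < S.h x := by
  have := S.h_smono (Set.self_mem_Ici) (Set.mem_Ici.mpr hx.le) hx
  rwa [S.h_zero] at this

lemma Setting.h_nonneg {x : ℝ} (hx : 0 ≤ x) : 0 ≤ S.h x := by
  rcases hx.eq_or_lt with h | h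
  · simp [← h, S.h_zero]
  · exact (S.h_pos h).le

lemma Setting.h_cross {x y : ℝ} (hx : 0 ≤ x) (hxy : x ≤ y) : x * S.h y ≤ y * S.h x := by
  rcases hxy.eq_or_lt with rfl | hlt
  · rw [mul_comm]
  have hy : 0 < y := lt_of_le_of_lt hx hlt
  have key := S.h_strictConcave.concaveOn.2 (Set.mem_Ici.mpr hy.le) (Set.self_mem_Ici)
    (show (0:ℝ) ≤ x / y by positivity)
    (show (0:ℝ) ≤ 1 - x / y by rw [sub_nonneg]; exact (div_le_one hy).mpr hxy) (by ring)
  simp only [smul_eq_mul, S.h_zero, mul_zero, add_zero] at key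
  rw [div_mul_cancel₀ _ hy.ne'] at key
  calc x * S.h y = (x / y * S.h y) * y := by field_simp
    _ ≤ S.h x * y := by nlinarith
    _ = y * S.h x := mul_comm _ _

lemma Setting.h_cross_strict {x y : ℝ} (hx : 0 < x) (hxy : x < y) :
    x * S.h y < y * S.h x := by
  have hy : 0 < y := lt_trans hx hxy
  have key := S.h_strictConcave.2 (Set.mem_Ici.mpr hy.le) (Set.self_mem_Ici)
    hy.ne' (show (0:ℝ) < x / y by positivity)
    (show (0:ℝ) < 1 - x / y by rw [sub_pos]; exact (div_lt_one hy).mpr hxy) (by ring)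
  simp only [smul_eq_mul, S.h_zero, mul_zero, add_zero] at key
  rw [div_mul_cancel₀ _ hy.ne'] at key
  calc x * S.h y = (x / y * S.h y) * y := by field_simp
    _ < S.h x * y := by nlinarith
    _ = y * S.h x := mul_comm _ _

lemma Setting.f_nonneg (t : ℝ) (θ : Θ) {x : ℝ} (hx : 0 ≤ x) : 0 ≤ S.f t θ x :=
  mul_nonneg (mul_nonneg (Real.exp_pos _).le (S.g_pos θ).le) (S.h_nonneg hx)

lemma Setting.f_pos (t : ℝ) (θ : Θ) {x : ℝ} (hx : 0 < x) : 0 < S.f t θ x :=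
  mul_pos (mul_pos (Real.exp_pos _) (S.g_pos θ)) (S.h_pos hx)

lemma Setting.f_zero (t : ℝ) (θ : Θ) : S.f t θ 0 = 0 := by
  simp [Setting.f, S.h_zero]

lemma Setting.f_mono (t : ℝ) (θ : Θ) {x y : ℝ} (hx : 0 ≤ x) (hxy : x ≤ y) :
    S.f t θ x ≤ S.f t θ y :=
  mul_le_mul_of_nonneg_left
    (S.h_smono.monotoneOn (Set.mem_Ici.mpr hx) (Set.mem_Ici.mpr (hx.trans hxy)) hxy)
    (mul_nonneg (Real.exp_pos _).le (S.g_pos θ).le)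

lemma Setting.f_lt_self (t M : ℝ) (θ : Θ) (hM : 0 < M) (hMf : S.f t θ M < M)
    {x : ℝ} (hx : M < x) : S.f t θ x < x := by
  have hc := S.h_cross hM.le hx.le
  have hE : 0 < Real.exp (-t) * S.g θ := mul_pos (Real.exp_pos _) (S.g_pos θ)
  have hfM : Real.exp (-t) * S.g θ * S.h M < M := hMf
  show Real.exp (-t) * S.g θ * S.h x < x
  nlinarith [mul_pos hE (S.h_pos (lt_trans hM hx)), S.h_nonneg hM.le]

/-- Key measure lemma: if `u ∘ T ≤ u` a.e. for a measure preserving `T` on a finite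
measure space, then `u ∘ T = u` a.e. -/
lemma ae_comp_eq_of_ae_comp_le {μ : Measure Θ} [IsFiniteMeasure μ]
    {T : Θ → Θ} (hT : MeasurePreserving T μ μ) {u : Θ → ℝ} (hu : Measurable u)
    (hle : ∀ᵐ θ ∂μ, u (T θ) ≤ u θ) : ∀ᵐ θ ∂μ, u (T θ) = u θ := by
  have key : ∀ c : ℚ, μ ({θ | (c : ℝ) < u θ} \ T ⁻¹' {θ | (c : ℝ) < u θ}) = 0 := by
    intro c
    set A : Set Θ := {θ | (c : ℝ) < u θ} with hA
    have hAm : MeasurableSet A := measurableSet_lt measurable_const hu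
    have h1 : μ (T ⁻¹' A \ A) = 0 := by
      refine measure_mono_null ?_ (ae_iff.mp hle)
      intro θ hθ
      simp only [Set.mem_diff, Set.mem_preimage, hA, Set.mem_setOf_eq] at hθ
      simp only [Set.mem_setOf_eq, not_le]
      exact lt_of_le_of_lt (le_of_not_gt hθ.2) hθ.1
    have h2 : μ (T ⁻¹' A) = μ A := hT.measure_preimage hAm.nullMeasurableSet
    have h3 := measure_inter_add_diff (μ := μ) (T ⁻¹' A) hAm
    have h4 := measure_inter_add_diff (μ := μ) A (hAm.preimage hT.measurable)
    rw [h1, add_zero] at h3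
    rw [Set.inter_comm] at h4
    have h5 : μ (T ⁻¹' A ∩ A) + μ (A \ T ⁻¹' A) = μ (T ⁻¹' A ∩ A) + 0 := by
      rw [add_zero, h4, ← h2, h3]
    exact ((ENNReal.add_right_inj (measure_ne_top μ _)).mp h5)
  have hlt : μ {θ | u (T θ) < u θ} = 0 := by
    refine measure_mono_null ?_
      (measure_iUnion_null (s := fun c : ℚ =>
        {θ | (c : ℝ) < u θ} \ T ⁻¹' {θ | (c : ℝ) < u θ}) key)
    intro θ hθ
    obtain ⟨c, hc1, hc2⟩ := exists_rat_btwn (Set.mem_setOf_eq ▸ hθ)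
    refine Set.mem_iUnion.mpr ⟨c, hc2, ?_⟩
    simp only [Set.mem_preimage, Set.mem_setOf_eq, not_lt]
    exact hc1.le
  have h6 : ∀ᵐ θ ∂μ, ¬ (u (T θ) < u θ) := by
    rw [ae_iff]
    simpa only [not_not] using hlt
  filter_upwards [hle, h6] with θ a b
  exact le_antisymm a (not_lt.mp b)

lemma Setting.fn_nonneg (t : ℝ) : ∀ (n : ℕ) (θ : Θ) {x : ℝ}, 0 ≤ x → 0 ≤ S.fn t n θ x
  | 0, _, _, hx => hx
  | n + 1, θ, x, hx => S.f_nonneg t _ (Setting.fn_nonneg t n θ hx)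

lemma Setting.fn_mono (t : ℝ) : ∀ (n : ℕ) (θ : Θ) {x y : ℝ}, 0 ≤ x → x ≤ y →
    S.fn t n θ x ≤ S.fn t n θ y
  | 0, _, _, _, _, hxy => hxy
  | n + 1, θ, x, y, hx, hxy =>
    S.f_mono t _ (S.fn_nonneg t n θ hx) (Setting.fn_mono t n θ hx hxy)

lemma Setting.fn_inv (t : ℝ) (φ' : Θ → ℝ) (hinv : ∀ θ, S.f t θ (φ' θ) = φ' (S.T θ)) :
    ∀ (n : ℕ) (θ : Θ), S.fn t n θ (φ' θ) = φ' (S.T^[n] θ)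
  | 0, θ => rfl
  | n + 1, θ => by
    show S.f t (S.T^[n] θ) (S.fn t n θ (φ' θ)) = _
    rw [Setting.fn_inv t φ' hinv n θ, hinv, Function.iterate_succ_apply']

lemma Setting.T_iter_Tinv_iter (n : ℕ) (θ : Θ) : S.T^[n] (S.Tinv^[n] θ) = θ :=
  (Function.LeftInverse.iterate S.right_inv n) θ

lemma Setting.ψ_zero' (t M : ℝ) (θ : Θ) : S.ψ t M 0 θ = M := rfl

lemma Setting.ψ_succ (t M : ℝ) (n : ℕ) (θ : Θ) :
    S.ψ t M (n + 1) θ = S.f t (S.Tinv θ) (S.ψ t M n (S.Tinv θ)) := by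
  show S.f t (S.T^[n] (S.Tinv^[n+1] θ)) (S.fn t n (S.Tinv^[n+1] θ) M) = _
  rw [Function.iterate_succ_apply, S.T_iter_Tinv_iter n (S.Tinv θ)]
  rfl

lemma Setting.ψ_nonneg (t M : ℝ) (hM : 0 ≤ M) (n : ℕ) (θ : Θ) : 0 ≤ S.ψ t M n θ :=
  S.fn_nonneg t n _ hM

lemma Setting.ψ_succ_le (t M : ℝ) (hM : 0 < M) (hMf : ∀ θ, S.f t θ M < M) :
    ∀ (n : ℕ) (θ : Θ), S.ψ t M (n + 1) θ ≤ S.ψ t M n θ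
  | 0, θ => by
    rw [S.ψ_succ, S.ψ_zero']
    exact (hMf _).le
  | n + 1, θ => by
    rw [S.ψ_succ t M (n+1) θ, S.ψ_succ t M n θ]
    exact S.f_mono t _ (S.ψ_nonneg t M hM.le _ _) (Setting.ψ_succ_le t M hM hMf n _)

lemma Setting.ψ_le_M (t M : ℝ) (hM : 0 < M) (hMf : ∀ θ, S.f t θ M < M) :
    ∀ (n : ℕ) (θ : Θ), S.ψ t M n θ ≤ M
  | 0, θ => le_refl M
  | n + 1, θ => (S.ψ_succ_le t M hM hMf n θ).trans (Setting.ψ_le_M t M hM hMf n θ)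

lemma Setting.hmax_cont : Continuous (fun x : ℝ => S.h (max x 0)) := by
  have c2 : Continuous (fun x : ℝ => (⟨max x 0, Set.mem_Ici.mpr (le_max_right _ _)⟩ : Set.Ici (0:ℝ))) :=
    Continuous.subtype_mk (continuous_id.max continuous_const) _
  exact S.h_cont.restrict.comp c2

lemma Setting.fn_meas (t M : ℝ) (hM : 0 ≤ M) :
    ∀ n : ℕ, Measurable (fun θ => S.fn t n θ M)
  | 0 => measurable_const
  | n + 1 => by
    have ih := Setting.fn_meas t M hM n
    have : (fun θ => S.fn t (n+1) θ M) =
        fun θ => Real.exp (-t) * S.g (S.T^[n] θ) * S.h (max (S.fn t n θ M) 0) := by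
      funext θ
      rw [max_eq_left (S.fn_nonneg t n θ hM)]
      rfl
    rw [this]
    exact ((measurable_const.mul (S.g_meas.comp (S.T_meas.iterate n))).mul
      (S.hmax_cont.measurable.comp ih))

lemma Setting.ψ_meas (t M : ℝ) (hM : 0 ≤ M) (n : ℕ) : Measurable (S.ψ t M n) :=
  (S.fn_meas t M hM n).comp (S.Tinv_meas.iterate n)

lemma Setting.φ_bdd (t M : ℝ) (hM : 0 ≤ M) (θ : Θ) :
    BddBelow (Set.range fun n : ℕ => S.ψ t M (n + 1) θ) := by
  refine ⟨0, ?_⟩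
  rintro x ⟨n, rfl⟩
  exact S.ψ_nonneg t M hM _ _

lemma Setting.φ_nonneg (t M : ℝ) (hM : 0 ≤ M) (θ : Θ) : 0 ≤ S.φ t M θ :=
  le_ciInf fun n => S.ψ_nonneg t M hM _ _

lemma Setting.φ_tendsto (t M : ℝ) (hM : 0 < M) (hMf : ∀ θ, S.f t θ M < M) (θ : Θ) :
    Tendsto (fun n : ℕ => S.ψ t M (n + 1) θ) atTop (𝓝 (S.φ t M θ)) :=
  tendsto_atTop_ciInf (antitone_nat_of_succ_le fun n => S.ψ_succ_le t M hM hMf (n+1) θ)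
    (S.φ_bdd t M hM.le θ)

lemma Setting.φ_meas (t M : ℝ) (hM : 0 < M) (hMf : ∀ θ, S.f t θ M < M) :
    Measurable (S.φ t M) :=
 by
  apply measurable_of_tendsto_metrizable (f := fun n θ => S.ψ t M (n + 1) θ)
    (fun n => S.ψ_meas t M hM.le (n+1))
  rw [tendsto_pi_nhds]
  intro θ
  exact S.φ_tendsto t M hM hMf θ

lemma Setting.φ_inv (t M : ℝ) (hM : 0 < M) (hMf : ∀ θ, S.f t θ M < M) (θ : Θ) :
    S.f t θ (S.φ t M θ) = S.φ t M (S.T θ) := by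
  have h1 := S.φ_tendsto t M hM hMf θ
  have h2 : Tendsto (fun n : ℕ => S.ψ t M (n + 2) (S.T θ)) atTop (𝓝 (S.φ t M (S.T θ))) := by
    have := (S.φ_tendsto t M hM hMf (S.T θ)).comp (tendsto_add_atTop_nat 1)
    exact this
  have h3 : ∀ n : ℕ, S.ψ t M (n + 2) (S.T θ) = S.f t θ (S.ψ t M (n + 1) θ) := by
    intro n
    rw [show n + 2 = (n + 1) + 1 from rfl, S.ψ_succ, S.left_inv θ]
  simp only [h3] at h2
  have h4 : Tendsto (fun n : ℕ => S.f t θ (S.ψ t M (n + 1) θ)) atTop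
      (𝓝 (S.f t θ (S.φ t M θ))) := by
    have hin : Tendsto (fun n : ℕ => S.ψ t M (n + 1) θ) atTop
        (𝓝[Set.Ici 0] (S.φ t M θ)) :=
      tendsto_nhdsWithin_iff.mpr ⟨h1, Eventually.of_forall fun n => S.ψ_nonneg t M hM.le _ _⟩
    have hh : Tendsto (fun n : ℕ => S.h (S.ψ t M (n + 1) θ)) atTop
        (𝓝 (S.h (S.φ t M θ))) :=
      ((S.h_cont _ (Set.mem_Ici.mpr (S.φ_nonneg t M hM.le θ))).tendsto).comp hin
    simpa [Setting.f] using hh.const_mul (Real.exp (-t) * S.g θ)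
  exact tendsto_nhds_unique h4 h2

end Aux

/-- for an ergodic `T`-invariant probability measure `μ`, every measurable
`T_t`-invariant function `φ : Θ → [0,∞)` satisfies `φ = 0` μ-a.e. or `φ = φ_t` μ-a.e. -/
theorem stmt2 {Θ : Type*} [MeasurableSpace Θ] (S : Setting Θ) (t M : ℝ)
    (hM : 0 < M) (hMf : ∀ θ, S.f t θ M < M)
    (μ : Measure Θ) [IsProbabilityMeasure μ] (hμ : Ergodic S.T μ)
    (φ' : Θ → ℝ) (hmeas : Measurable φ') (hnonneg : ∀ θ, 0 ≤ φ' θ)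
    (hinv : ∀ θ, S.f t θ (φ' θ) = φ' (S.T θ)) :
    (∀ᵐ θ ∂μ, φ' θ = 0) ∨ (∀ᵐ θ ∂μ, φ' θ = S.φ t M θ) := by
  have Tpres : MeasurePreserving S.T μ μ := hμ.toMeasurePreserving
  have hAm : MeasurableSet {θ | φ' θ = 0} := hmeas (measurableSet_singleton 0)
  have hApre : S.T ⁻¹' {θ | φ' θ = 0} = {θ | φ' θ = 0} := by
    ext θ
    simp only [Set.mem_preimage, Set.mem_setOf_eq, ← hinv θ]
    constructor
    · intro h0
      by_contra hne
      exact (S.f_pos t θ (lt_of_le_of_ne (hnonneg θ) (Ne.symm hne))).ne' h0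
    · intro h0
      rw [h0]
      exact S.f_zero t θ
  rcases hμ.toPreErgodic.ae_empty_or_univ hAm hApre with hA | hA
  · -- the zero set is null: we show `φ' = φ_t` a.e.
    right
    have hpos : ∀ᵐ θ ∂μ, 0 < φ' θ := by
      have h0 : μ {θ | φ' θ = 0} = 0 := ae_eq_empty.mp hA
      rw [ae_iff]
      refine measure_mono_null ?_ h0
      intro θ hθ
      simp only [Set.mem_setOf_eq, not_lt] at hθ ⊢
      exact le_antisymm hθ (hnonneg θ)
    -- Step A: `φ' ≤ M` a.e.
    have hu_le : ∀ θ, max (φ' (S.T θ)) M ≤ max (φ' θ) M := by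
      intro θ
      rcases le_or_gt (φ' θ) M with hc | hc
      · have hle : φ' (S.T θ) ≤ M := by
          rw [← hinv θ]
          exact le_of_lt (lt_of_le_of_lt (S.f_mono t θ (hnonneg θ) hc) (hMf θ))
        exact max_le (hle.trans (le_max_right _ _)) (le_max_right _ _)
      · have hle : φ' (S.T θ) ≤ φ' θ := by
          rw [← hinv θ]
          exact (S.f_lt_self t M θ hM (hMf θ) hc).le
        exact max_le (hle.trans (le_max_left _ _)) (le_max_right _ _)
    have hueq := ae_comp_eq_of_ae_comp_le Tpres (hmeas.max measurable_const)
      (Filter.Eventually.of_forall hu_le)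
    have hMle : ∀ᵐ θ ∂μ, φ' θ ≤ M := by
      filter_upwards [hueq] with θ hθ
      by_contra hgt
      push_neg at hgt
      have h1 : φ' (S.T θ) < φ' θ := by
        rw [← hinv θ]
        exact S.f_lt_self t M θ hM (hMf θ) hgt
      have h2 : max (φ' (S.T θ)) M < max (φ' θ) M :=
        lt_of_lt_of_le (max_lt h1 hgt) (le_max_left _ _)
      exact h2.ne hθ
    -- `Tinv` is measure preserving
    have TinvPres : MeasurePreserving S.Tinv μ μ := by
      refine ⟨S.Tinv_meas, Measure.ext fun s hs => ?_⟩
      rw [Measure.map_apply S.Tinv_meas hs]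
      have hps : S.T ⁻¹' (S.Tinv ⁻¹' s) = s := by
        ext θ; simp [S.left_inv θ]
      calc μ (S.Tinv ⁻¹' s)
          = μ (S.T ⁻¹' (S.Tinv ⁻¹' s)) :=
            (Tpres.measure_preimage ((S.Tinv_meas hs).nullMeasurableSet)).symm
        _ = μ s := by rw [hps]
    have hNm : MeasurableSet {θ | M < φ' θ} := measurableSet_lt measurable_const hmeas
    have hN0 : μ {θ | M < φ' θ} = 0 := by
      have := ae_iff.mp hMle
      simpa only [not_le] using this
    have hall : ∀ᵐ θ ∂μ, ∀ n : ℕ, φ' (S.Tinv^[n] θ) ≤ M := by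
      rw [ae_all_iff]
      intro n
      rw [ae_iff]
      have hset : {θ | ¬ φ' (S.Tinv^[n] θ) ≤ M} = S.Tinv^[n] ⁻¹' {θ | M < φ' θ} := by
        ext θ; simp [not_le]
      rw [hset, (TinvPres.iterate n).measure_preimage hNm.nullMeasurableSet]
      exact hN0
    -- Step A': `φ' ≤ φ_t` a.e.
    have hφle : ∀ᵐ θ ∂μ, φ' θ ≤ S.φ t M θ := by
      filter_upwards [hall] with θ hθ
      refine le_ciInf fun n => ?_
      have hfninv := S.fn_inv t φ' hinv (n + 1) (S.Tinv^[n + 1] θ)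
      rw [S.T_iter_Tinv_iter (n + 1) θ] at hfninv
      calc φ' θ = S.fn t (n + 1) (S.Tinv^[n + 1] θ) (φ' (S.Tinv^[n + 1] θ)) := hfninv.symm
        _ ≤ S.fn t (n + 1) (S.Tinv^[n + 1] θ) M :=
            S.fn_mono t (n + 1) _ (hnonneg _) (hθ (n + 1))
        _ = S.ψ t M (n + 1) θ := rfl
    -- Step B: the ratio `φ_t / φ'` is a.e. nonincreasing along `T`, hence a.e. constant
    have hρmeas : Measurable (fun θ => S.φ t M θ / φ' θ) :=
      (S.φ_meas t M hM hMf).div hmeas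
    have hρle : ∀ᵐ θ ∂μ, S.φ t M (S.T θ) / φ' (S.T θ) ≤ S.φ t M θ / φ' θ := by
      filter_upwards [hpos, hφle] with θ h1 h2
      have hE : (0:ℝ) < Real.exp (-t) * S.g θ := mul_pos (Real.exp_pos _) (S.g_pos θ)
      have e1 : φ' (S.T θ) = Real.exp (-t) * S.g θ * S.h (φ' θ) := (hinv θ).symm
      have e2 : S.φ t M (S.T θ) = Real.exp (-t) * S.g θ * S.h (S.φ t M θ) :=
        (S.φ_inv t M hM hMf θ).symm
      rw [e1, e2, mul_div_mul_left _ _ hE.ne']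
      have hhpos : 0 < S.h (φ' θ) := S.h_pos h1
      rw [div_le_div_iff₀ hhpos h1]
      have hcr := S.h_cross h1.le h2
      nlinarith [hcr]
    have hρeq := ae_comp_eq_of_ae_comp_le Tpres hρmeas hρle
    filter_upwards [hpos, hφle, hρeq] with θ h1 h2 h3
    by_contra hne
    have hlt : φ' θ < S.φ t M θ := lt_of_le_of_ne h2 hne
    have hE : (0:ℝ) < Real.exp (-t) * S.g θ := mul_pos (Real.exp_pos _) (S.g_pos θ)
    have e1 : φ' (S.T θ) = Real.exp (-t) * S.g θ * S.h (φ' θ) := (hinv θ).symm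
    have e2 : S.φ t M (S.T θ) = Real.exp (-t) * S.g θ * S.h (S.φ t M θ) :=
      (S.φ_inv t M hM hMf θ).symm
    rw [e1, e2, mul_div_mul_left _ _ hE.ne'] at h3
    have hhpos : 0 < S.h (φ' θ) := S.h_pos h1
    rw [div_eq_div_iff hhpos.ne' h1.ne'] at h3
    have hcr := S.h_cross_strict h1 hlt
    nlinarith [hcr]
  · -- the zero set is conull: `φ' = 0` a.e.
    left
    rw [ae_iff, ← Set.compl_setOf]
    exact ae_eq_univ.mp hA
end

section
/- Let t ∈ ℝ and θ ∈ Θ. If φ_t(θ) > 0 (i.e. θ ∉ N_t), then Γ(θ) ≥ t. Equivalently: if Γ(θ) < t then φ_t(θ) = 0. -/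
open MeasureTheory Filter Topology

namespace Setting

variable {Θ : Type*} [MeasurableSpace Θ]

lemma h_contOn (S : Setting Θ) : ContinuousOn S.h (Set.Ici 0) :=
  fun x hx => (S.h_hasDeriv x hx).continuousWithinAt

lemma h_strictMono (S : Setting Θ) : StrictMonoOn S.h (Set.Ici 0) := by
  apply strictMonoOn_of_deriv_pos (convex_Ici 0) S.h_contOn
  intro x hx
  rw [interior_Ici] at hx
  have hd : HasDerivAt S.h (S.h' x) x :=
    (S.h_hasDeriv x (Set.mem_Ici.2 (Set.mem_Ioi.1 hx).le)).hasDerivAt (Ici_mem_nhds hx)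
  rw [hd.deriv]
  exact S.h'_pos x hx

lemma h_nonneg_s4 (S : Setting Θ) {x : ℝ} (hx : 0 ≤ x) : 0 ≤ S.h x := by
  rcases eq_or_lt_of_le hx with rfl | hx
  · simp [S.h_zero]
  · have := S.h_strictMono Set.self_mem_Ici (Set.mem_Ici.2 hx.le) hx
    rw [S.h_zero] at this
    exact this.le

lemma h_le_self (S : Setting Θ) {x : ℝ} (hx : 0 ≤ x) : S.h x ≤ x := by
  rcases eq_or_lt_of_le hx with rfl | hx
  · simp [S.h_zero]
  have hslope : Tendsto (slope S.h 0) (𝓝[Set.Ioi 0] 0) (𝓝 1) := by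
    have hd := S.h_hasDeriv 0 Set.self_mem_Ici
    rw [S.h'_zero, hasDerivWithinAt_iff_tendsto_slope] at hd
    simpa [Set.Ici_sdiff_left] using hd
  have hev : ∀ᶠ s in 𝓝[Set.Ioi 0] 0, S.h x / x ≤ slope S.h 0 s := by
    filter_upwards [self_mem_nhdsWithin, nhdsWithin_le_nhds (Iio_mem_nhds hx)]
      with s hs hsx
    have hs0 : (0:ℝ) < s := hs
    have hsx' : s < x := hsx
    have hab : (1 - s/x) + s/x = 1 := by ring
    have ha : 0 ≤ 1 - s/x := by
      have : s/x < 1 := (div_lt_one hx).2 hsx'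
      linarith
    have hb : 0 ≤ s/x := by positivity
    have hconc := S.h_strictConcave.concaveOn.2 (Set.self_mem_Ici)
      (Set.mem_Ici.2 hx.le) ha hb hab
    have hcomb : (1 - s/x) • (0:ℝ) + (s/x) • x = s := by
      simp only [smul_eq_mul]; field_simp; ring
    rw [hcomb, smul_eq_mul, smul_eq_mul, S.h_zero, mul_zero, zero_add] at hconc
    rw [slope_def_field, S.h_zero, sub_zero, sub_zero]
    rw [div_le_div_iff₀ hx hs0]
    calc S.h x * s = (s / x * S.h x) * x := by field_simp
      _ ≤ S.h s * x := mul_le_mul_of_nonneg_right hconc hx.le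
  have h1 : S.h x / x ≤ 1 := ge_of_tendsto hslope hev
  exact (div_le_one hx).mp h1

lemma fn_bound (S : Setting Θ) (t M : ℝ) (hM : 0 ≤ M) (θ' : Θ) :
    ∀ n : ℕ, 0 ≤ S.fn t n θ' M ∧
      S.fn t n θ' M ≤
        Real.exp (-(n*t)) * (∏ k ∈ Finset.range n, S.g (S.T^[k] θ')) * M := by
  intro n
  induction n with
  | zero => refine ⟨hM, ?_⟩; simp [fn]
  | succ n ih =>
    obtain ⟨ih0, ihle⟩ := ih
    have hgpos := (S.g_pos (S.T^[n] θ')).le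
    have hg : 0 ≤ Real.exp (-t) * S.g (S.T^[n] θ') := by positivity
    constructor
    · have hh := S.h_nonneg_s4 ih0
      simp only [fn, f]
      positivity
    · have h1 : S.fn t (n+1) θ' M ≤ Real.exp (-t) * S.g (S.T^[n] θ') * S.fn t n θ' M := by
        simp only [fn, f]
        exact mul_le_mul_of_nonneg_left (S.h_le_self ih0) hg
      refine h1.trans ?_
      calc Real.exp (-t) * S.g (S.T^[n] θ') * S.fn t n θ' M
          ≤ Real.exp (-t) * S.g (S.T^[n] θ') *
            (Real.exp (-(n*t)) * (∏ k ∈ Finset.range n, S.g (S.T^[k] θ')) * M) :=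
            mul_le_mul_of_nonneg_left ihle hg
        _ = Real.exp (-((n+1:ℕ)*t)) * (∏ k ∈ Finset.range (n+1), S.g (S.T^[k] θ')) * M := by
            rw [Finset.prod_range_succ]
            have hxp : Real.exp (-((n+1:ℕ)*t)) = Real.exp (-t) * Real.exp (-((n:ℝ)*t)) := by
              rw [← Real.exp_add]
              push_cast
              ring_nf
            rw [hxp]
            ring

lemma ψ_nonneg_s4 (S : Setting Θ) (t M : ℝ) (hM : 0 ≤ M) (θ : Θ) (n : ℕ) :
    0 ≤ S.ψ t M n θ :=
  (S.fn_bound t M hM (S.Tinv^[n] θ) n).1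

lemma ψ_bound (S : Setting Θ) (t M : ℝ) (hM : 0 ≤ M) (θ : Θ) (n : ℕ) :
    S.ψ t M n θ ≤ M * Real.exp (n * (S.Γn n θ - t)) := by
  have hle := (S.fn_bound t M hM (S.Tinv^[n] θ) n).2
  have hprod : (∏ k ∈ Finset.range n, S.g (S.T^[k] (S.Tinv^[n] θ)))
      = ∏ k ∈ Finset.range n, S.g (S.Tinv^[k+1] θ) := by
    rw [← Finset.prod_range_reflect (fun j => S.g (S.Tinv^[j+1] θ)) n]
    apply Finset.prod_congr rfl
    intro k hk
    have hk' : k < n := Finset.mem_range.mp hk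
    have h1 : S.T^[k] (S.Tinv^[n] θ) = S.Tinv^[n-k] θ := by
      have hn : S.Tinv^[n] θ = S.Tinv^[k] (S.Tinv^[n-k] θ) := by
        rw [← Function.iterate_add_apply]
        congr 1
        omega
      rw [hn, S.right_inv.iterate k]
    rw [h1]
    congr 2
    omega
  have hsum : (∑ k ∈ Finset.range n, Real.log (S.g (S.Tinv^[k+1] θ)))
      = n * S.Γn n θ := by
    rcases Nat.eq_zero_or_pos n with rfl | hn
    · simp [Γn]
    · unfold Γn
      field_simp
  have hprodexp : (∏ k ∈ Finset.range n, S.g (S.Tinv^[k+1] θ))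
      = Real.exp (n * S.Γn n θ) := by
    rw [← hsum, Real.exp_sum]
    exact Finset.prod_congr rfl fun k _ => (Real.exp_log (S.g_pos _)).symm
  calc S.ψ t M n θ
      ≤ Real.exp (-(n*t)) * (∏ k ∈ Finset.range n, S.g (S.T^[k] (S.Tinv^[n] θ))) * M := hle
    _ = M * Real.exp (n * (S.Γn n θ - t)) := by
        rw [hprod, hprodexp, ← Real.exp_add]
        ring_nf

lemma Γn_bddAbove (S : Setting Θ) (θ : Θ) :
    ∃ B : ℝ, ∀ n : ℕ, S.Γn n θ ≤ B := by
  obtain ⟨C, hC⟩ := S.g_bdd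
  refine ⟨max (Real.log C) 0, fun n => ?_⟩
  rcases Nat.eq_zero_or_pos n with rfl | hn
  · simp [Γn]
  · have hsum : (∑ k ∈ Finset.range n, Real.log (S.g (S.Tinv^[k+1] θ)))
        ≤ n * Real.log C := by
      calc (∑ k ∈ Finset.range n, Real.log (S.g (S.Tinv^[k+1] θ)))
          ≤ ∑ k ∈ Finset.range n, Real.log C :=
            Finset.sum_le_sum fun k _ =>
              Real.log_le_log (S.g_pos _) (hC _)
        _ = n * Real.log C := by simp [mul_comm]
    have hn' : (0:ℝ) < n := by exact_mod_cast hn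
    calc S.Γn n θ ≤ (n * Real.log C) / n := by
          unfold Γn
          exact div_le_div_of_nonneg_right hsum hn'.le
      _ = Real.log C := by field_simp
      _ ≤ max (Real.log C) 0 := le_max_left _ _

end Setting

/-- if `φ_t(θ) > 0` (i.e. `θ ∉ N_t`) then `Γ(θ) ≥ t`; equivalently,
if `Γ(θ) < t` then `φ_t(θ) = 0`. -/
theorem stmt4 {Θ : Type*} [MeasurableSpace Θ] (S : Setting Θ) (t M : ℝ)
    (hM : 0 < M) (hMf : ∀ θ, S.f t θ M < M) (θ : Θ) :
    (0 < S.φ t M θ → t ≤ S.Γ θ) ∧ (S.Γ θ < t → S.φ t M θ = 0) := by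
  have hM0 : 0 ≤ M := hM.le
  have key : S.Γ θ < t → S.φ t M θ = 0 := by
    intro hΓ
    set t' : ℝ := (S.Γ θ + t) / 2 with ht'
    have hΓt' : S.Γ θ < t' := by rw [ht']; linarith
    have ht't : t' < t := by rw [ht']; linarith
    -- frequently Γn < t'
    obtain ⟨B, hB⟩ := S.Γn_bddAbove θ
    have hbdd : Filter.IsBoundedUnder (· ≤ ·) Filter.atTop (fun n : ℕ => S.Γn n θ) :=
      Filter.isBoundedUnder_of ⟨B, hB⟩
    have hcob : Filter.IsCoboundedUnder (· ≥ ·) Filter.atTop (fun n : ℕ => S.Γn n θ) :=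
      hbdd.isCoboundedUnder_ge
    have hfreq : ∃ᶠ n in Filter.atTop, S.Γn n θ < t' :=
      Filter.frequently_lt_of_liminf_lt hcob hΓt'
    -- φ is nonnegative and bounded below
    have hψnn : ∀ n : ℕ, 0 ≤ S.ψ t M (n + 1) θ := fun n => S.ψ_nonneg_s4 t M hM0 θ (n + 1)
    have hbddBelow : BddBelow (Set.range fun n : ℕ => S.ψ t M (n + 1) θ) :=
      ⟨0, by rintro x ⟨n, rfl⟩; exact hψnn n⟩
    have hφnn : 0 ≤ S.φ t M θ := le_ciInf hψnn
    by_contra hne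
    have hφpos : 0 < S.φ t M θ := lt_of_le_of_ne hφnn (Ne.symm hne)
    -- M * exp (n * (t' - t)) → 0
    have htend : Filter.Tendsto (fun n : ℕ => M * Real.exp ((n : ℝ) * (t' - t)))
        Filter.atTop (𝓝 0) := by
      have h1 : Filter.Tendsto (fun n : ℕ => (n : ℝ) * (t' - t)) Filter.atTop Filter.atBot :=
        Filter.Tendsto.atTop_mul_const_of_neg (by linarith) tendsto_natCast_atTop_atTop
      have h2 : Filter.Tendsto (fun n : ℕ => Real.exp ((n : ℝ) * (t' - t)))
          Filter.atTop (𝓝 0) := Real.tendsto_exp_atBot.comp h1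
      simpa using h2.const_mul M
    have hev : ∀ᶠ n : ℕ in Filter.atTop, M * Real.exp ((n : ℝ) * (t' - t)) < S.φ t M θ :=
      htend.eventually (gt_mem_nhds hφpos)
    obtain ⟨N, hN⟩ := Filter.eventually_atTop.mp hev
    obtain ⟨n, hnN, hnΓ⟩ := Filter.frequently_atTop.mp hfreq (N + 1)
    have hn1 : 1 ≤ n := le_trans (Nat.le_add_left 1 N) hnN
    -- φ ≤ ψ n
    have hφle : S.φ t M θ ≤ S.ψ t M n θ := by
      have := ciInf_le hbddBelow (n - 1)
      have hrw : n - 1 + 1 = n := by omega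
      rwa [hrw] at this
    have hexp : S.ψ t M n θ ≤ M * Real.exp ((n : ℝ) * (t' - t)) := by
      refine (S.ψ_bound t M hM0 θ n).trans ?_
      have : (n : ℝ) * (S.Γn n θ - t) ≤ (n : ℝ) * (t' - t) := by
        apply mul_le_mul_of_nonneg_left (by linarith) (by positivity)
      exact mul_le_mul_of_nonneg_left (Real.exp_le_exp.2 this) hM0
    have : S.φ t M θ < S.φ t M θ :=
      lt_of_le_of_lt (hφle.trans hexp) (hN n (le_trans (Nat.le_succ N) hnN))
    exact lt_irrefl _ this
  refine ⟨fun hφ => ?_, key⟩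
  by_contra hlt
  push_neg at hlt
  exact absurd (key hlt) (ne_of_gt hφ)
end

section
/- Let t ∈ ℝ and θ ∈ Θ with φ_t(θ) > 0. Then φ_t(T^{−k}θ) > 0 for every k ≥ 0, and for every ℓ ≥ 1 the identity log φ_t(θ) = ∑_{k=1}^{ℓ} (log g(T^{−k}θ) − t) + ∑_{k=1}^{ℓ} H(φ_t(T^{−k}θ)) + log φ_t(T^{−ℓ}θ) holds, where H(x) := log(h(x)/x) for x > 0. -/
open MeasureTheory Filter Topology

section Aux

variable {Θ : Type*} [MeasurableSpace Θ]

lemma aux_h_cont (S : Setting Θ) : ContinuousOn S.h (Set.Ici 0) :=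
  fun x hx => (S.h_hasDeriv x hx).continuousWithinAt

lemma aux_h_mono (S : Setting Θ) : StrictMonoOn S.h (Set.Ici 0) := by
  apply strictMonoOn_of_deriv_pos (convex_Ici 0) (aux_h_cont S)
  intro x hx
  rw [interior_Ici] at hx
  have hd := (S.h_hasDeriv x (Set.mem_Ici.mpr (le_of_lt (Set.mem_Ioi.mp hx)))).hasDerivAt (Ici_mem_nhds hx)
  rw [hd.deriv]
  exact S.h'_pos x hx

lemma aux_h_pos (S : Setting Θ) {x : ℝ} (hx : 0 < x) : 0 < S.h x := by
  have := aux_h_mono S (Set.self_mem_Ici) hx.le hx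
  rwa [S.h_zero] at this

lemma aux_h_nonneg (S : Setting Θ) {x : ℝ} (hx : 0 ≤ x) : 0 ≤ S.h x := by
  rcases eq_or_lt_of_le hx with h | h
  · rw [← h, S.h_zero]
  · exact (aux_h_pos S h).le

lemma aux_f_nonneg (S : Setting Θ) (t : ℝ) (θ : Θ) {x : ℝ} (hx : 0 ≤ x) :
    0 ≤ S.f t θ x :=
  mul_nonneg (mul_nonneg (Real.exp_pos _).le (S.g_pos θ).le) (aux_h_nonneg S hx)

lemma aux_f_mono (S : Setting Θ) (t : ℝ) (θ : Θ) {x y : ℝ} (hx : 0 ≤ x) (hxy : x ≤ y) :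
    S.f t θ x ≤ S.f t θ y := by
  unfold Setting.f
  have := (aux_h_mono S).monotoneOn hx (hx.trans hxy) hxy
  exact mul_le_mul_of_nonneg_left this (mul_nonneg (Real.exp_pos _).le (S.g_pos θ).le)

lemma aux_fn_nonneg (S : Setting Θ) (t : ℝ) : ∀ (n : ℕ) (θ : Θ) {x : ℝ}, 0 ≤ x →
    0 ≤ S.fn t n θ x
  | 0, _, _, hx => hx
  | n + 1, θ, _, hx => aux_f_nonneg S t _ (aux_fn_nonneg S t n θ hx)

lemma aux_fn_mono (S : Setting Θ) (t : ℝ) : ∀ (n : ℕ) (θ : Θ) {x y : ℝ}, 0 ≤ x → x ≤ y →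
    S.fn t n θ x ≤ S.fn t n θ y
  | 0, _, _, _, _, hxy => hxy
  | n + 1, θ, _, _, hx, hxy =>
    aux_f_mono S t _ (aux_fn_nonneg S t n θ hx) (aux_fn_mono S t n θ hx hxy)

lemma aux_fn_le (S : Setting Θ) (t M : ℝ) (hM : 0 < M) (hMf : ∀ θ, S.f t θ M < M) :
    ∀ (n : ℕ) (θ : Θ), S.fn t n θ M ≤ M
  | 0, _ => le_rfl
  | n + 1, θ => le_of_lt <| lt_of_le_of_lt
      (aux_f_mono S t _ (aux_fn_nonneg S t n θ hM.le) (aux_fn_le S t M hM hMf n θ)) (hMf _)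

lemma aux_fn_shift (S : Setting Θ) (t : ℝ) : ∀ (n : ℕ) (θ : Θ) (x : ℝ),
    S.fn t (n + 1) θ x = S.fn t n (S.T θ) (S.f t θ x)
  | 0, θ, x => by simp [Setting.fn]
  | n + 1, θ, x => by
    show S.f t (S.T^[n + 1] θ) (S.fn t (n + 1) θ x) = _
    rw [aux_fn_shift S t n θ x, Function.iterate_succ_apply]
    rfl

lemma aux_TinvT (S : Setting Θ) (n : ℕ) (θ : Θ) : S.T^[n] (S.Tinv^[n] θ) = θ :=
  (S.right_inv.iterate n) θ

lemma aux_psi_rec (S : Setting Θ) (t M : ℝ) (n : ℕ) (θ : Θ) :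
    S.ψ t M (n + 1) θ = S.f t (S.Tinv θ) (S.ψ t M n (S.Tinv θ)) := by
  unfold Setting.ψ
  show S.f t (S.T^[n] (S.Tinv^[n+1] θ)) (S.fn t n (S.Tinv^[n+1] θ) M) = _
  rw [Function.iterate_succ_apply, aux_TinvT]

lemma aux_psi_anti (S : Setting Θ) (t M : ℝ) (hM : 0 < M) (hMf : ∀ θ, S.f t θ M < M)
    (n : ℕ) (θ : Θ) : S.ψ t M (n + 1) θ ≤ S.ψ t M n θ := by
  unfold Setting.ψ
  rw [aux_fn_shift, Function.iterate_succ_apply', S.right_inv]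
  exact aux_fn_mono S t n _ (aux_f_nonneg S t _ hM.le) (hMf _).le

lemma aux_psi_nonneg (S : Setting Θ) (t M : ℝ) (hM : 0 < M) (n : ℕ) (θ : Θ) :
    0 ≤ S.ψ t M n θ := aux_fn_nonneg S t n _ hM.le

lemma aux_phi_nonneg (S : Setting Θ) (t M : ℝ) (hM : 0 < M) (θ : Θ) :
    0 ≤ S.φ t M θ :=
  le_ciInf fun n => aux_psi_nonneg S t M hM (n + 1) θ

lemma aux_phi_tendsto (S : Setting Θ) (t M : ℝ) (hM : 0 < M) (hMf : ∀ θ, S.f t θ M < M)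
    (θ : Θ) : Tendsto (fun n => S.ψ t M (n + 1) θ) atTop (𝓝 (S.φ t M θ)) := by
  apply tendsto_atTop_ciInf
  · exact antitone_nat_of_succ_le fun n => aux_psi_anti S t M hM hMf (n + 1) θ
  · exact ⟨0, fun x ⟨n, hn⟩ => hn ▸ aux_psi_nonneg S t M hM (n + 1) θ⟩

lemma aux_phi_fix (S : Setting Θ) (t M : ℝ) (hM : 0 < M) (hMf : ∀ θ, S.f t θ M < M)
    (θ : Θ) : S.φ t M θ = S.f t (S.Tinv θ) (S.φ t M (S.Tinv θ)) := by
  have h1 := aux_phi_tendsto S t M hM hMf (S.Tinv θ)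
  have h1' : Tendsto (fun n => S.ψ t M (n + 1) (S.Tinv θ)) atTop
      (𝓝[Set.Ici 0] (S.φ t M (S.Tinv θ))) :=
    tendsto_nhdsWithin_of_tendsto_nhds_of_eventually_within _ h1
      (Eventually.of_forall fun n => aux_psi_nonneg S t M hM (n + 1) (S.Tinv θ))
  have hc : ContinuousWithinAt S.h (Set.Ici 0) (S.φ t M (S.Tinv θ)) :=
    aux_h_cont S _ (aux_phi_nonneg S t M hM (S.Tinv θ))
  have h2 : Tendsto (fun n => S.f t (S.Tinv θ) (S.ψ t M (n + 1) (S.Tinv θ))) atTop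
      (𝓝 (S.f t (S.Tinv θ) (S.φ t M (S.Tinv θ)))) := by
    unfold Setting.f
    exact (hc.tendsto.comp h1').const_mul _
  have h3 : Tendsto (fun n => S.ψ t M (n + 2) θ) atTop (𝓝 (S.φ t M θ)) :=
    (aux_phi_tendsto S t M hM hMf θ).comp (tendsto_add_atTop_nat 1)
  have h4 : (fun n => S.ψ t M (n + 2) θ) =
      fun n => S.f t (S.Tinv θ) (S.ψ t M (n + 1) (S.Tinv θ)) := by
    funext n; exact aux_psi_rec S t M (n + 1) θ
  rw [h4] at h3
  exact tendsto_nhds_unique h3 h2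

lemma aux_phi_pos_step (S : Setting Θ) (t M : ℝ) (hM : 0 < M) (hMf : ∀ θ, S.f t θ M < M)
    (θ : Θ) (hpos : 0 < S.φ t M θ) : 0 < S.φ t M (S.Tinv θ) := by
  rcases eq_or_lt_of_le (aux_phi_nonneg S t M hM (S.Tinv θ)) with h | h
  · exfalso
    rw [aux_phi_fix S t M hM hMf θ, ← h] at hpos
    simp [Setting.f, S.h_zero] at hpos
  · exact h

lemma aux_log_step (S : Setting Θ) (t M : ℝ) (hM : 0 < M) (hMf : ∀ θ, S.f t θ M < M)
    (θ : Θ) (hpos : 0 < S.φ t M θ) :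
    Real.log (S.φ t M θ) = (Real.log (S.g (S.Tinv θ)) - t) +
      S.Hfn (S.φ t M (S.Tinv θ)) + Real.log (S.φ t M (S.Tinv θ)) := by
  have hx : 0 < S.φ t M (S.Tinv θ) := aux_phi_pos_step S t M hM hMf θ hpos
  have hhx : 0 < S.h (S.φ t M (S.Tinv θ)) := aux_h_pos S hx
  rw [aux_phi_fix S t M hM hMf θ]
  unfold Setting.f Setting.Hfn
  rw [Real.log_mul (mul_pos (Real.exp_pos _) (S.g_pos _)).ne' hhx.ne', Real.log_mul (Real.exp_ne_zero _)
    (S.g_pos _).ne', Real.log_exp, Real.log_div hhx.ne' hx.ne']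
  ring

end Aux

/-- if `φ_t(θ) > 0`, then `φ_t(T^{-k}θ) > 0` for all `k ≥ 0` and, for all
`ℓ ≥ 1`, `log φ_t(θ) = ∑_{k=1}^ℓ (log g(T^{-k}θ) - t) + ∑_{k=1}^ℓ H(φ_t(T^{-k}θ))
+ log φ_t(T^{-ℓ}θ)`, where `H(x) = log (h(x)/x)`. -/

theorem stmt7 {Θ : Type*} [MeasurableSpace Θ] (S : Setting Θ) (t M : ℝ)
    (hM : 0 < M) (hMf : ∀ θ, S.f t θ M < M) (θ : Θ) (hpos : 0 < S.φ t M θ) :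
    (∀ k : ℕ, 0 < S.φ t M (S.Tinv^[k] θ)) ∧
    (∀ ℓ : ℕ, 1 ≤ ℓ →
      Real.log (S.φ t M θ) =
        (∑ k ∈ Finset.range ℓ, (Real.log (S.g (S.Tinv^[k + 1] θ)) - t)) +
        (∑ k ∈ Finset.range ℓ, S.Hfn (S.φ t M (S.Tinv^[k + 1] θ))) +
        Real.log (S.φ t M (S.Tinv^[ℓ] θ))) := by
  have hk : ∀ k : ℕ, 0 < S.φ t M (S.Tinv^[k] θ) := by
    intro k
    induction k with
    | zero => exact hpos
    | succ n ih =>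
      rw [Function.iterate_succ_apply']
      exact aux_phi_pos_step S t M hM hMf _ ih
  have key : ∀ ℓ : ℕ,
      Real.log (S.φ t M θ) =
        (∑ k ∈ Finset.range ℓ, (Real.log (S.g (S.Tinv^[k + 1] θ)) - t)) +
        (∑ k ∈ Finset.range ℓ, S.Hfn (S.φ t M (S.Tinv^[k + 1] θ))) +
        Real.log (S.φ t M (S.Tinv^[ℓ] θ)) := by
    intro ℓ
    induction ℓ with
    | zero => simp
    | succ n ih =>
      rw [Finset.sum_range_succ, Finset.sum_range_succ,
        (by rw [Function.iterate_succ_apply'] :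
          S.φ t M (S.Tinv^[n + 1] θ) = S.φ t M (S.Tinv (S.Tinv^[n] θ))),
        (by rw [Function.iterate_succ_apply'] :
          S.g (S.Tinv^[n + 1] θ) = S.g (S.Tinv (S.Tinv^[n] θ))),
        ih, aux_log_step S t M hM hMf (S.Tinv^[n] θ) (hk n)]
      ring
  exact ⟨hk, fun ℓ _ => key ℓ⟩
end

section
/- Assume in addition that h is twice differentiable at 0 with h''(0) < 0 and that inf_Θ g > 0 (so that log g is bounded). Let t ∈ ℝ and let μ be a T-invariant probability measure on (Θ, 𝓑). If μ(N_t) = 0, then γ(μ) > t. -/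
open MeasureTheory Filter Topology

namespace StmtAux

open Setting

variable {Θ : Type*} [MeasurableSpace Θ] (S : Setting Θ)

lemma hcont : ContinuousOn S.h (Set.Ici 0) :=
  fun x hx => (S.h_hasDeriv x hx).continuousWithinAt

lemma hsm : StrictMonoOn S.h (Set.Ici 0) := by
  apply strictMonoOn_of_deriv_pos (convex_Ici 0) (hcont S)
  intro x hx
  rw [interior_Ici] at hx
  have hd : HasDerivAt S.h (S.h' x) x :=
    (S.h_hasDeriv x (Set.mem_Ici.2 (le_of_lt (Set.mem_Ioi.1 hx)))).hasDerivAt (Ici_mem_nhds (Set.mem_Ioi.1 hx))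
  rw [hd.deriv]
  exact S.h'_pos x hx

lemma h_nonneg {x : ℝ} (hx : 0 ≤ x) : 0 ≤ S.h x := by
  rcases hx.eq_or_lt with h | h
  · rw [← h, S.h_zero]
  · have := (hsm S) (Set.self_mem_Ici) (le_of_lt h : (0:ℝ) ≤ x) h
    rw [S.h_zero] at this; exact this.le

lemma h_pos {x : ℝ} (hx : 0 < x) : 0 < S.h x := by
  have := (hsm S) (Set.self_mem_Ici) hx.le hx
  rwa [S.h_zero] at this

/-- slope antitone: for `0 < y < x`, `h y / y > h x / x`. -/
lemma slope_gt {x y : ℝ} (hy : 0 < y) (hyx : y < x) : S.h x / x < S.h y / y := by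
  have hx : 0 < x := hy.trans hyx
  have hlam : y / x < 1 := (div_lt_one hx).2 hyx
  have hlam0 : 0 < y / x := div_pos hy hx
  have key := S.h_strictConcave.2 Set.self_mem_Ici (show x ∈ Set.Ici (0:ℝ) from hx.le)
    hx.ne (show (0:ℝ) < 1 - y/x by linarith) hlam0 (show (1 - y/x) + y/x = 1 by ring)
  simp only [smul_eq_mul, S.h_zero, mul_zero, zero_add] at key
  have hxy : y / x * x = y := by field_simp
  rw [hxy] at key
  rw [div_lt_div_iff₀ hx hy]
  have h2 := mul_lt_mul_of_pos_right key hx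
  have h3 : y / x * S.h x * x = S.h x * y := by field_simp
  linarith

lemma h_lt_self {x : ℝ} (hx : 0 < x) : S.h x < x := by
  have hd := S.h_hasDeriv 0 Set.self_mem_Ici
  rw [S.h'_zero, hasDerivWithinAt_iff_tendsto_slope] at hd
  have hset : Set.Ici (0:ℝ) \ {0} = Set.Ioi 0 := by
    ext z; simp [lt_iff_le_and_ne, ne_comm, and_comm]
  rw [hset] at hd
  set y := x/2 with hy
  have hy0 : 0 < y := by positivity
  have hyx : y < x := by simp [hy]; linarith
  have h1 : S.h y / y ≤ 1 := by
    refine ge_of_tendsto hd ?_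
    filter_upwards [eventually_nhdsWithin_of_eventually_nhds (eventually_lt_nhds hy0),
      self_mem_nhdsWithin] with z hz hz0
    have hzy : S.h y / y < S.h z / z := slope_gt S hz0 hz
    rw [slope_def_field]
    simp only [S.h_zero, sub_zero]
    linarith
  have h2 : S.h x / x < S.h y / y := slope_gt S hy0 hyx
  have : S.h x / x < 1 := lt_of_lt_of_le h2 h1
  exact (div_lt_one hx).1 this

variable {t M : ℝ}

lemma f_nonneg (θ : Θ) {x : ℝ} (hx : 0 ≤ x) : 0 ≤ S.f t θ x :=
  mul_nonneg (mul_nonneg (Real.exp_pos _).le (S.g_pos θ).le) (h_nonneg S hx)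

lemma f_pos (θ : Θ) {x : ℝ} (hx : 0 < x) : 0 < S.f t θ x :=
  mul_pos (mul_pos (Real.exp_pos _) (S.g_pos θ)) (h_pos S hx)

lemma f_mono (θ : Θ) {x y : ℝ} (hx : 0 ≤ x) (hxy : x ≤ y) : S.f t θ x ≤ S.f t θ y := by
  unfold Setting.f
  have : S.h x ≤ S.h y := (hsm S).monotoneOn hx (hx.trans hxy) hxy
  have hc : 0 ≤ Real.exp (-t) * S.g θ := mul_nonneg (Real.exp_pos _).le (S.g_pos θ).le
  exact mul_le_mul_of_nonneg_left this hc

variable (hM : 0 < M) (hMf : ∀ θ, S.f t θ M < M)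

include hM hMf in
lemma fn_mem : ∀ (n : ℕ) (θ : Θ) (x : ℝ), x ∈ Set.Icc 0 M → S.fn t n θ x ∈ Set.Icc 0 M := by
  intro n
  induction n with
  | zero => intro θ x hx; exact hx
  | succ n ih =>
    intro θ x hx
    obtain ⟨h0, h1⟩ := ih θ x hx
    constructor
    · exact f_nonneg S _ h0
    · exact le_of_lt (lt_of_le_of_lt (f_mono S _ h0 h1) (hMf _))

include hM hMf in
lemma fn_mono : ∀ (n : ℕ) (θ : Θ) (x y : ℝ), x ∈ Set.Icc 0 M → y ∈ Set.Icc 0 M → x ≤ y →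
    S.fn t n θ x ≤ S.fn t n θ y := by
  intro n
  induction n with
  | zero => intro _ _ _ _ _ hxy; exact hxy
  | succ n ih =>
    intro θ x y hx hy hxy
    exact f_mono S _ (fn_mem S hM hMf n θ x hx).1 (ih θ x y hx hy hxy)

include hM hMf in
lemma psi_mem (n : ℕ) (θ : Θ) : S.ψ t M n θ ∈ Set.Icc 0 M :=
  fn_mem S hM hMf n _ M ⟨hM.le, le_refl M⟩

lemma fn_succ_left (n : ℕ) (θ : Θ) (x : ℝ) :
    S.fn t (n + 1) θ x = S.fn t n (S.T θ) (S.f t θ x) := by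
  induction n with
  | zero => rfl
  | succ n ih =>
    show S.f t (S.T^[n+1] θ) (S.fn t (n+1) θ x) = S.f t (S.T^[n] (S.T θ)) (S.fn t n (S.T θ) (S.f t θ x))
    rw [ih, Function.iterate_succ_apply]

lemma psi_succ_T (n : ℕ) (θ : Θ) :
    S.ψ t M (n + 1) (S.T θ) = S.f t θ (S.ψ t M n θ) := by
  unfold Setting.ψ
  have e1 : S.Tinv^[n+1] (S.T θ) = S.Tinv^[n] θ := by
    rw [Function.iterate_succ_apply, S.left_inv θ]
  rw [e1]
  show S.f t (S.T^[n] (S.Tinv^[n] θ)) (S.fn t n (S.Tinv^[n] θ) M) = _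
  rw [(S.right_inv.iterate n) θ]

include hM hMf in
lemma psi_antitone (θ : Θ) : Antitone (fun n => S.ψ t M n θ) := by
  apply antitone_nat_of_succ_le
  intro n
  show S.ψ t M (n+1) θ ≤ S.ψ t M n θ
  unfold Setting.ψ
  rw [fn_succ_left]
  have e1 : S.T (S.Tinv^[n+1] θ) = S.Tinv^[n] θ := by
    rw [Function.iterate_succ_apply', S.right_inv _]
  rw [e1]
  refine fn_mono S hM hMf n _ _ M ?_ ⟨hM.le, le_refl M⟩ (hMf _).le
  constructor
  · exact f_nonneg S _ hM.le
  · exact (hMf _).le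

include hM hMf in
lemma phi_mem (θ : Θ) : S.φ t M θ ∈ Set.Icc 0 M := by
  constructor
  · exact Real.iInf_nonneg (fun n => (psi_mem S hM hMf (n+1) θ).1)
  · refine le_trans (ciInf_le ⟨0, ?_⟩ 0) (psi_mem S hM hMf 1 θ).2
    rintro z ⟨n, rfl⟩
    exact (psi_mem S hM hMf (n+1) θ).1

include hM hMf in
lemma phi_le_psi (n : ℕ) (θ : Θ) : S.φ t M θ ≤ S.ψ t M (n+1) θ := by
  refine ciInf_le ⟨0, ?_⟩ n
  rintro z ⟨m, rfl⟩
  exact (psi_mem S hM hMf (m+1) θ).1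

include hM hMf in
lemma phi_T_le (θ : Θ) : S.φ t M (S.T θ) ≤ S.f t θ (S.φ t M θ) := by
  have hbdd : BddBelow (Set.range fun n => S.ψ t M (n+1) θ) := by
    refine ⟨0, ?_⟩; rintro z ⟨m, rfl⟩; exact (psi_mem S hM hMf (m+1) θ).1
  have hanti : Antitone (fun n : ℕ => S.ψ t M (n+1) θ) :=
    fun a b hab => psi_antitone S hM hMf θ (Nat.succ_le_succ hab)
  have htends : Tendsto (fun n : ℕ => S.ψ t M (n+1) θ) atTop (𝓝 (S.φ t M θ)) :=
    tendsto_atTop_ciInf hanti hbdd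
  have hφ0 : 0 ≤ S.φ t M θ := (phi_mem S hM hMf θ).1
  have hcw : ContinuousWithinAt S.h (Set.Ici 0) (S.φ t M θ) := (hcont S) _ hφ0
  have htends2 : Tendsto (fun n : ℕ => S.ψ t M (n+1) θ) atTop (𝓝[Set.Ici 0] (S.φ t M θ)) := by
    rw [tendsto_nhdsWithin_iff]
    exact ⟨htends, Filter.Eventually.of_forall (fun n => (psi_mem S hM hMf (n+1) θ).1)⟩
  have htends3 : Tendsto (fun n : ℕ => S.f t θ (S.ψ t M (n+1) θ)) atTop
      (𝓝 (S.f t θ (S.φ t M θ))) := by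
    unfold Setting.f
    exact (hcw.tendsto.comp htends2).const_mul _
  refine ge_of_tendsto htends3 (Filter.Eventually.of_forall (fun n => ?_))
  calc S.φ t M (S.T θ) ≤ S.ψ t M (n+2) (S.T θ) := phi_le_psi S hM hMf (n+1) (S.T θ)
    _ = S.f t θ (S.ψ t M (n+1) θ) := psi_succ_T S (n+1) θ

-- measurability
lemma meas_comp_h {u : Θ → ℝ} (hu : Measurable u) (h0 : ∀ θ, 0 ≤ u θ) :
    Measurable (fun θ => S.h (u θ)) := by
  have : (fun θ => S.h (u θ)) =
      (Set.Ici (0:ℝ)).restrict S.h ∘ fun θ => (⟨u θ, h0 θ⟩ : Set.Ici (0:ℝ)) := rfl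
  rw [this]
  exact ((hcont S).restrict.measurable).comp (hu.subtype_mk)

include hM hMf in
lemma meas_fnM (n : ℕ) : Measurable (fun θ => S.fn t n θ M) := by
  induction n with
  | zero => exact measurable_const
  | succ n ih =>
    show Measurable (fun θ => Real.exp (-t) * S.g (S.T^[n] θ) * S.h (S.fn t n θ M))
    exact (measurable_const.mul (S.g_meas.comp (S.T_meas.iterate n))).mul
      (meas_comp_h S ih (fun θ => (fn_mem S hM hMf n θ M ⟨hM.le, le_refl M⟩).1))

include hM hMf in
lemma meas_psi (n : ℕ) : Measurable (S.ψ t M n) :=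
  (meas_fnM S hM hMf n).comp (S.Tinv_meas.iterate n)

include hM hMf in
lemma meas_phi : Measurable (S.φ t M) :=
  Measurable.iInf (fun n => meas_psi S hM hMf (n+1))

end StmtAux

set_option maxHeartbeats 1000000 in
/-- assuming `h''(0) < 0` and `inf g > 0`, for a `T`-invariant probability
measure `μ`: if `μ(N_t) = 0` then `γ(μ) > t`. -/
theorem stmt10 {Θ : Type*} [MeasurableSpace Θ] (S : Setting Θ)
    (hsecond : ∃ c : ℝ, c < 0 ∧ HasDerivWithinAt S.h' c (Set.Ici 0) 0)
    (hg : ∃ c : ℝ, 0 < c ∧ ∀ θ, c ≤ S.g θ)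
    (t M : ℝ) (hM : 0 < M) (hMf : ∀ θ, S.f t θ M < M)
    (μ : Measure Θ) [IsProbabilityMeasure μ] (hμ : MeasurePreserving S.T μ μ)
    (hN : μ (S.Nset t M) = 0) :
    t < S.γfn μ := by
  classical
  open StmtAux in
  obtain ⟨c₀, hc₀, hgc⟩ := hg
  obtain ⟨C, hC⟩ := S.g_bdd
  set φf := S.φ t M with hφf
  set F : Θ → ℝ := fun θ => Real.log (φf θ) with hF
  set G : Θ → ℝ := fun θ => Real.log (S.g θ) - t with hG
  set H : Θ → ℝ := fun θ => Real.log (S.h (φf θ) / φf θ) with hH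
  set Hb : Θ → ℝ := fun θ => max (H θ) (-1) with hHb
  set Lg : ℝ := max |Real.log c₀| |Real.log C| with hLg
  have hLg0 : 0 ≤ Lg := le_trans (abs_nonneg _) (le_max_left _ _)
  have hglog : ∀ θ, |Real.log (S.g θ)| ≤ Lg := by
    intro θ
    have h1 : Real.log c₀ ≤ Real.log (S.g θ) := Real.log_le_log hc₀ (hgc θ)
    have h2 : Real.log (S.g θ) ≤ Real.log C := Real.log_le_log (S.g_pos θ) (hC θ)
    rw [abs_le]
    constructor
    · have h3 : -|Real.log c₀| ≤ Real.log c₀ := neg_abs_le _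
      have h4 : |Real.log c₀| ≤ Lg := le_max_left _ _
      linarith
    · have h3 : Real.log C ≤ |Real.log C| := le_abs_self _
      have h4 : |Real.log C| ≤ Lg := le_max_right _ _
      linarith
  set L : ℝ := Lg + |t| with hL
  have hL0 : 0 ≤ L := add_nonneg hLg0 (abs_nonneg _)
  have hGabs : ∀ θ, |G θ| ≤ L := by
    intro θ
    simp only [hG]
    rw [sub_eq_add_neg]
    refine le_trans (abs_add_le _ _) ?_
    rw [abs_neg]
    exact add_le_add (hglog θ) le_rfl
  set B : ℝ := 2*L + 1 with hB
  have hB0 : 0 ≤ B := by linarith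
  have hNmeas : MeasurableSet (S.Nset t M) := by
    have : S.Nset t M = S.φ t M ⁻¹' {0} := by ext θ; simp [Setting.Nset]
    rw [this]
    exact (meas_phi S hM hMf) (measurableSet_singleton 0)
  have hae1 : ∀ᵐ θ ∂μ, φf θ ≠ 0 := by
    rw [ae_iff]
    simpa [Setting.Nset, hφf] using hN
  have hae2 : ∀ᵐ θ ∂μ, φf (S.T θ) ≠ 0 := by
    rw [ae_iff]
    have he : {θ | ¬ φf (S.T θ) ≠ 0} = S.T ⁻¹' (S.Nset t M) := by
      ext θ; simp [Setting.Nset, hφf]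
    rw [he, hμ.measure_preimage hNmeas.nullMeasurableSet, hN]
  have haepos : ∀ᵐ θ ∂μ, 0 < φf θ ∧ 0 < φf (S.T θ) := by
    filter_upwards [hae1, hae2] with θ h1 h2
    exact ⟨lt_of_le_of_ne (phi_mem S hM hMf θ).1 (Ne.symm h1),
      lt_of_le_of_ne (phi_mem S hM hMf (S.T θ)).1 (Ne.symm h2)⟩
  have key : ∀ θ, 0 < φf θ → 0 < φf (S.T θ) → F (S.T θ) - F θ ≤ G θ + H θ := by
    intro θ h1 h2
    have hh : 0 < S.h (φf θ) := h_pos S h1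
    have hle : φf (S.T θ) ≤ S.f t θ (φf θ) := phi_T_le S hM hMf θ
    have l1 : Real.log (φf (S.T θ)) ≤ Real.log (S.f t θ (φf θ)) := Real.log_le_log h2 hle
    have l2 : Real.log (S.f t θ (φf θ)) = -t + Real.log (S.g θ) + Real.log (S.h (φf θ)) := by
      unfold Setting.f
      rw [Real.log_mul (mul_ne_zero (Real.exp_ne_zero _) (S.g_pos θ).ne') hh.ne',
        Real.log_mul (Real.exp_ne_zero _) (S.g_pos θ).ne', Real.log_exp]
    have l3 : H θ = Real.log (S.h (φf θ)) - Real.log (φf θ) := by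
      simp only [hH]
      exact Real.log_div hh.ne' h1.ne'
    rw [l2] at l1
    simp only [hF, hG]
    rw [l3]
    linarith
  have Hneg : ∀ θ, 0 < φf θ → H θ < 0 := fun θ h0 =>
    Real.log_neg (div_pos (h_pos S h0) h0) ((div_lt_one h0).2 (h_lt_self S h0))
  have Hnonpos : ∀ θ, H θ ≤ 0 := by
    intro θ
    rcases (phi_mem S hM hMf θ).1.eq_or_lt with h0 | h0
    · have e : φf θ = 0 := h0.symm
      simp only [hH, e, S.h_zero, zero_div, Real.log_zero, le_refl]
    · exact (Hneg θ h0).le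
  have Hbmem : ∀ θ, -1 ≤ Hb θ ∧ Hb θ ≤ 0 := fun θ =>
    ⟨le_max_right _ _, max_le (Hnonpos θ) (by norm_num)⟩
  set K : ℝ := max (Real.log M) 0 with hK
  have hK0 : 0 ≤ K := le_max_right _ _
  have hFle : ∀ θ, F θ ≤ K := by
    intro θ
    rcases (phi_mem S hM hMf θ).1.eq_or_lt with h0 | h0
    · have e : φf θ = 0 := h0.symm
      simp only [hF, e, Real.log_zero]
      exact hK0
    · have : Real.log (φf θ) ≤ Real.log M := Real.log_le_log h0 (phi_mem S hM hMf θ).2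
      exact le_trans this (le_max_left _ _)
  have measφ : Measurable φf := meas_phi S hM hMf
  have measF : Measurable F := Real.measurable_log.comp measφ
  have measH : Measurable H := Real.measurable_log.comp
    ((meas_comp_h S measφ (fun θ => (phi_mem S hM hMf θ).1)).div measφ)
  have measHb : Measurable Hb := measH.max measurable_const
  have measG : Measurable G := (Real.measurable_log.comp S.g_meas).sub measurable_const
  have intG : Integrable G μ :=
    Integrable.mono' (integrable_const L) measG.aestronglyMeasurable
      (Filter.Eventually.of_forall (fun θ => by rw [Real.norm_eq_abs]; exact hGabs θ))
  have intHb : Integrable Hb μ := by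
    refine Integrable.mono' (integrable_const 1) measHb.aestronglyMeasurable
      (Filter.Eventually.of_forall (fun θ => ?_))
    rw [Real.norm_eq_abs, abs_le]
    exact ⟨(Hbmem θ).1, le_trans (Hbmem θ).2 zero_le_one⟩
  have intlogg : Integrable (fun θ => Real.log (S.g θ)) μ :=
    Integrable.mono' (integrable_const Lg)
      ((Real.measurable_log.comp S.g_meas)).aestronglyMeasurable
      (Filter.Eventually.of_forall (fun θ => by rw [Real.norm_eq_abs]; exact hglog θ))
  set FN : ℕ → Θ → ℝ := fun N θ => max (F θ) (-(N:ℝ)) with hFN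
  have measFN : ∀ N, Measurable (FN N) := fun N => measF.max measurable_const
  have hFNabs : ∀ N θ, |FN N θ| ≤ max K N := by
    intro N θ
    rw [abs_le]
    constructor
    · have h1 : -(N:ℝ) ≤ FN N θ := le_max_right _ _
      have h2 : (N:ℝ) ≤ max K N := le_max_right _ _
      linarith
    · exact max_le (le_trans (hFle θ) (le_max_left _ _))
        (le_trans (neg_nonpos.mpr (Nat.cast_nonneg N)) (le_trans hK0 (le_max_left _ _)))
  have intFN : ∀ N, Integrable (FN N) μ := fun N =>
    Integrable.mono' (integrable_const (max K N)) (measFN N).aestronglyMeasurable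
      (Filter.Eventually.of_forall (fun θ => by rw [Real.norm_eq_abs]; exact hFNabs N θ))
  have intFNT : ∀ N, Integrable (fun θ => FN N (S.T θ)) μ := fun N =>
    Integrable.mono' (integrable_const (max K N))
      ((measFN N).comp S.T_meas).aestronglyMeasurable
      (Filter.Eventually.of_forall (fun θ => by rw [Real.norm_eq_abs]; exact hFNabs N _))
  have hintT : ∀ N, ∫ θ, FN N (S.T θ) ∂μ = ∫ θ, FN N θ ∂μ := by
    intro N
    set e : Θ ≃ᵐ Θ :=
      { toFun := S.T, invFun := S.Tinv, left_inv := S.left_inv, right_inv := S.right_inv,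
        measurable_toFun := S.T_meas, measurable_invFun := S.Tinv_meas } with he
    exact MeasurePreserving.integral_comp hμ e.measurableEmbedding (FN N)
  set D : ℕ → Θ → ℝ := fun N θ => FN N (S.T θ) - FN N θ - G θ - Hb θ with hD
  set V : ℕ → Θ → ℝ := fun N θ => B - D N θ with hV
  set R : ℝ := B + ∫ θ, G θ ∂μ + ∫ θ, Hb θ ∂μ with hR
  have measD : ∀ N, Measurable (D N) := fun N =>
    ((((measFN N).comp S.T_meas).sub (measFN N)).sub measG).sub measHb
  have measV : ∀ N, Measurable (V N) := fun N => measurable_const.sub (measD N)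
  have intD : ∀ N, Integrable (D N) μ := fun N =>
    (((intFNT N).sub (intFN N)).sub intG).sub intHb
  have intV : ∀ N, Integrable (V N) μ := fun N => (integrable_const B).sub (intD N)
  have intVeq : ∀ N, ∫ θ, V N θ ∂μ = R := by
    intro N
    have intA : Integrable (fun θ => FN N (S.T θ) - FN N θ) μ := (intFNT N).sub (intFN N)
    have intAG : Integrable (fun θ => FN N (S.T θ) - FN N θ - G θ) μ := intA.sub intG
    have i1 : ∫ θ, (FN N (S.T θ) - FN N θ - G θ - Hb θ) ∂μ =
        (∫ θ, (FN N (S.T θ) - FN N θ - G θ) ∂μ) - ∫ θ, Hb θ ∂μ := integral_sub intAG intHb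
    have i2 : ∫ θ, (FN N (S.T θ) - FN N θ - G θ) ∂μ =
        (∫ θ, (FN N (S.T θ) - FN N θ) ∂μ) - ∫ θ, G θ ∂μ := integral_sub intA intG
    have i3 : ∫ θ, (FN N (S.T θ) - FN N θ) ∂μ =
        (∫ θ, FN N (S.T θ) ∂μ) - ∫ θ, FN N θ ∂μ := integral_sub (intFNT N) (intFN N)
    have hDint : ∫ θ, D N θ ∂μ = -∫ θ, G θ ∂μ - ∫ θ, Hb θ ∂μ := by
      simp only [hD]
      rw [i1, i2, i3, hintT N]
      ring
    have i4 : ∫ θ, (B - D N θ) ∂μ = (∫ _, B ∂μ) - ∫ θ, D N θ ∂μ :=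
      integral_sub (integrable_const B) (intD N)
    simp only [hV]
    rw [i4, hDint, integral_const]
    simp only [measureReal_def, measure_univ, ENNReal.toReal_one, smul_eq_mul, one_mul, mul_one, hR]
    ring
  have max_sub_max : ∀ a b c : ℝ, max b c - max a c ≤ max (b - a) 0 := by
    intro a b c
    rcases le_total b a with h | h
    · have h1 : max b c ≤ max a c := max_le_max h le_rfl
      have := le_max_right (b - a) (0:ℝ)
      linarith
    · have h1 : max b c ≤ max a c + (b - a) := by
        apply max_le
        · linarith [le_max_left a c]
        · linarith [le_max_right a c]
      have h2 : b - a ≤ max (b-a) 0 := le_max_left _ _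
      linarith
  have haeV : ∀ N, 0 ≤ᵐ[μ] V N := by
    intro N
    filter_upwards [haepos] with θ hθ
    obtain ⟨h1, h2⟩ := hθ
    have k1 : FN N (S.T θ) - FN N θ ≤ max (F (S.T θ) - F θ) 0 := max_sub_max _ _ _
    have k2 : F (S.T θ) - F θ ≤ G θ + H θ := key θ h1 h2
    have k3 : max (F (S.T θ) - F θ) 0 ≤ max (G θ) 0 :=
      max_le_max (by linarith [Hnonpos θ]) le_rfl
    have k4 : max (G θ) 0 ≤ L := max_le (le_trans (le_abs_self _) (hGabs θ)) hL0
    have k5 : -G θ ≤ L := le_trans (neg_le_abs _) (hGabs θ)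
    have k6 : -Hb θ ≤ 1 := by linarith [(Hbmem θ).1]
    simp only [hV, hD, Pi.zero_apply]
    linarith
  have hRnn : 0 ≤ R := by
    rw [← intVeq 0]
    exact integral_nonneg_of_ae (haeV 0)
  have hlim : ∀ᵐ θ ∂μ, ENNReal.ofReal B ≤ liminf (fun N => ENNReal.ofReal (V N θ)) atTop := by
    filter_upwards [haepos] with θ hθ
    obtain ⟨h1, h2⟩ := hθ
    obtain ⟨N₀, hN₀⟩ := exists_nat_ge (max (-F θ) (-F (S.T θ)))
    have hev : (fun N => ENNReal.ofReal (V N θ)) =ᶠ[atTop]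
        (fun _ => ENNReal.ofReal (B - (F (S.T θ) - F θ - G θ - Hb θ))) := by
      filter_upwards [eventually_ge_atTop N₀] with N hNN
      have hNc : max (-F θ) (-F (S.T θ)) ≤ (N:ℝ) := le_trans hN₀ (Nat.cast_le.2 hNN)
      have e1 : FN N θ = F θ := max_eq_left (by
        have := le_max_left (-F θ) (-F (S.T θ)); linarith)
      have e2 : FN N (S.T θ) = F (S.T θ) := max_eq_left (by
        have := le_max_right (-F θ) (-F (S.T θ)); linarith)
      simp only [hV, hD, e1, e2]
    have hten : Tendsto (fun N => ENNReal.ofReal (V N θ)) atTop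
        (𝓝 (ENNReal.ofReal (B - (F (S.T θ) - F θ - G θ - Hb θ)))) :=
      Tendsto.congr' hev.symm tendsto_const_nhds
    rw [hten.liminf_eq]
    apply ENNReal.ofReal_le_ofReal
    have k2 : F (S.T θ) - F θ ≤ G θ + H θ := key θ h1 h2
    have k3 : H θ ≤ Hb θ := le_max_left _ _
    linarith
  have fatou := lintegral_liminf_le (μ := μ) (u := (atTop : Filter ℕ))
    (f := fun N θ => ENNReal.ofReal (V N θ)) (fun N => (measV N).ennreal_ofReal)
  have lhs : ENNReal.ofReal B ≤ ∫⁻ θ, liminf (fun N => ENNReal.ofReal (V N θ)) atTop ∂μ := by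
    calc ENNReal.ofReal B = ∫⁻ _, ENNReal.ofReal B ∂μ := by
          rw [lintegral_const, measure_univ, mul_one]
      _ ≤ _ := lintegral_mono_ae hlim
  have rhs : ∀ N, ∫⁻ θ, ENNReal.ofReal (V N θ) ∂μ = ENNReal.ofReal R := by
    intro N
    rw [← ofReal_integral_eq_lintegral_ofReal (intV N) (haeV N), intVeq N]
  have hBR : ENNReal.ofReal B ≤ ENNReal.ofReal R := by
    refine le_trans lhs (le_trans fatou ?_)
    simp only [rhs]
    rw [liminf_const]
  have hBR' : B ≤ R := (ENNReal.ofReal_le_ofReal_iff hRnn).1 hBR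
  have hsum : 0 ≤ (∫ θ, G θ ∂μ) + ∫ θ, Hb θ ∂μ := by
    rw [hR] at hBR'
    linarith
  have posW : 0 < ∫ θ, -Hb θ ∂μ := by
    have hnn : 0 ≤ᵐ[μ] fun θ => -Hb θ :=
      Filter.Eventually.of_forall (fun θ => neg_nonneg.2 (Hbmem θ).2)
    rcases (integral_nonneg_of_ae hnn).eq_or_lt with h0 | h0
    · exfalso
      have hzero : (fun θ => -Hb θ) =ᵐ[μ] 0 :=
        (integral_eq_zero_iff_of_nonneg_ae hnn intHb.neg).1 h0.symm
      have hpos' : ∀ᵐ θ ∂μ, 0 < -Hb θ := by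
        filter_upwards [haepos] with θ hθ
        have hHb0 : Hb θ < 0 := max_lt (Hneg θ hθ.1) (by norm_num)
        linarith
      have hne2 : (ae μ).NeBot := ae_neBot.2 (IsProbabilityMeasure.ne_zero μ)
      obtain ⟨θ, hz, hp⟩ := (hzero.and hpos').exists
      simp only [Pi.zero_apply] at hz
      rw [hz] at hp
      exact lt_irrefl 0 hp
    · exact h0
  rw [integral_neg] at posW
  have hGpos : 0 < ∫ θ, G θ ∂μ := by linarith
  have hGint : ∫ θ, G θ ∂μ = S.γfn μ - t := by
    have i5 : ∫ θ, (Real.log (S.g θ) - t) ∂μ =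
        (∫ θ, Real.log (S.g θ) ∂μ) - ∫ _, t ∂μ := integral_sub intlogg (integrable_const t)
    simp only [hG]
    rw [i5, integral_const]
    simp only [measureReal_def, measure_univ, ENNReal.toReal_one, smul_eq_mul, one_mul, Setting.γfn]
  rw [hGint] at hGpos
  linarith
end
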